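/- In synchronous majority dynamics on a locally finite graph with odd degrees and a summable d-legal edge weighting z, the Lyapunov functional L_t = (1/4) ∑_{(i,j) ∈ E} z(i,j)(A^i_{t+1} − A^j_t)^2 satisfies L_t − L_{t−1} = −∑_{i ∈ V} J^i_t, where J^i_t = (1/2)(A^i_{t+1} − A^i_{t−1}) ∑_{j ∈ N(i)} z(i,j) A^j_t. -/

import Mathlib

/-- Auxiliary equivalence: ordered adjacent pairs as a sigma type over neighbor sets. -/
def pairEquiv {V : Type*} (G : SimpleGraph V) :
    (Σ i : V, G.neighborSet i) ≃ {p : V × V // G.Adj p.1 p.2} where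
  toFun x := ⟨(x.1, x.2.1), x.2.2⟩
  invFun p := ⟨p.1.1, p.1.2, p.2⟩
  left_inv x := rfl
  right_inv p := rfl

/-- Auxiliary equivalence: swapping the two coordinates of an adjacent pair. -/
def swapEquiv {V : Type*} (G : SimpleGraph V) :
    {p : V × V // G.Adj p.1 p.2} ≃ {p : V × V // G.Adj p.1 p.2} where
  toFun p := ⟨(p.1.2, p.1.1), p.2.symm⟩
  invFun p := ⟨(p.1.2, p.1.1), p.2.symm⟩
  left_inv p := rfl
  right_inv p := rfl


/-- With a summable `d`-legal edge weighting `z`, the Lyapunov functional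
`L_t = (1/4) ∑_{(i,j) ∈ E} z(i,j)(A^i_{t+1} - A^j_t)^2` (sum over ordered adjacent pairs,
as in the paper's manipulation) satisfies `L_t - L_{t-1} = -∑_i J^i_t`, where
`J^i_t = (1/2)(A^i_{t+1} - A^i_{t-1}) ∑_{j ∈ N(i)} z(i,j) A^j_t`.
(The time `t` of the claim is written `t+1` below.) -/
theorem stmt_2 {V : Type*} (G : SimpleGraph V) [∀ v : V, Fintype (G.neighborSet v)]
    (d : ℕ) (hd : 3 ≤ d)
    (hodd : ∀ i, Odd (G.degree i)) (hdeg : ∀ i, G.degree i ≤ d)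
    (z : V → V → ℝ) (hsym : ∀ i j, z i j = z j i)
    (hz01 : ∀ i j, G.Adj i j → 0 < z i j ∧ z i j ≤ 1)
    (hlegal : ∀ i j k, G.Adj i j → G.Adj i k →
      z i j / z i k < ((d : ℝ) + 1) / ((d : ℝ) - 1))
    (hzsum : Summable (fun p : {p : V × V // G.Adj p.1 p.2} => z p.1.1 p.1.2))
    (A : ℕ → V → ℤ) (hA0 : ∀ i, A 0 i = 1 ∨ A 0 i = -1)
    (hdyn : ∀ t i, A (t + 1) i =
      if 0 < ∑ j ∈ G.neighborFinset i, A t j then 1 else -1)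
    (t : ℕ) :
    (1 / 4 : ℝ) * (∑' p : {p : V × V // G.Adj p.1 p.2},
        z p.1.1 p.1.2 * ((A (t + 2) p.1.1 : ℝ) - (A (t + 1) p.1.2 : ℝ)) ^ 2)
      - (1 / 4 : ℝ) * (∑' p : {p : V × V // G.Adj p.1 p.2},
        z p.1.1 p.1.2 * ((A (t + 1) p.1.1 : ℝ) - (A t p.1.2 : ℝ)) ^ 2)
      = - ∑' i : V, (1 / 2 : ℝ) * ((A (t + 2) i : ℝ) - (A t i : ℝ)) *
          ∑ j ∈ G.neighborFinset i, z i j * (A (t + 1) j : ℝ) := by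
  classical
  set P := {p : V × V // G.Adj p.1 p.2} with hP
  -- all spins are ±1
  have hApm : ∀ s i, A s i = 1 ∨ A s i = -1 := by
    intro s i
    cases s with
    | zero => exact hA0 i
    | succ n => rw [hdyn]; split <;> simp
  have habs : ∀ s i, |(A s i : ℝ)| = 1 := by
    intro s i; rcases hApm s i with h | h <;> rw [h] <;> norm_num
  have hsq : ∀ s i, ((A s i : ℝ)) ^ 2 = 1 := by
    intro s i; rcases hApm s i with h | h <;> rw [h] <;> norm_num
  -- summability of the cross terms
  have key : ∀ s s' : ℕ,
      Summable (fun p : P => z p.1.1 p.1.2 * (A s p.1.1 : ℝ) * (A s' p.1.2 : ℝ)) := by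
    intro s s'
    rw [← summable_abs_iff]
    refine Summable.of_nonneg_of_le (fun _ => abs_nonneg _) ?_ hzsum
    intro p
    rw [abs_mul, abs_mul, habs, habs, mul_one, mul_one, abs_of_pos (hz01 _ _ p.2).1]
  -- the expansion of each Lyapunov sum
  have hexp : ∀ s s' : ℕ,
      (∑' p : P, z p.1.1 p.1.2 * ((A s p.1.1 : ℝ) - (A s' p.1.2 : ℝ)) ^ 2)
        = 2 * (∑' p : P, z p.1.1 p.1.2)
          - 2 * (∑' p : P, z p.1.1 p.1.2 * (A s p.1.1 : ℝ) * (A s' p.1.2 : ℝ)) := by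
    intro s s'
    have hfun : (fun p : P => z p.1.1 p.1.2 * ((A s p.1.1 : ℝ) - (A s' p.1.2 : ℝ)) ^ 2)
        = fun p : P => 2 * z p.1.1 p.1.2
            - 2 * (z p.1.1 p.1.2 * (A s p.1.1 : ℝ) * (A s' p.1.2 : ℝ)) := by
      funext p
      have h1 := hsq s p.1.1
      have h2 := hsq s' p.1.2
      linear_combination z p.1.1 p.1.2 * h1 + z p.1.1 p.1.2 * h2
    rw [hfun, Summable.tsum_sub (hzsum.mul_left 2) ((key s s').mul_left 2),
      tsum_mul_left, tsum_mul_left]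
  -- pair sums as iterated sums
  have hpair : ∀ g : V → V → ℝ, Summable (fun p : P => g p.1.1 p.1.2) →
      ∑' p : P, g p.1.1 p.1.2 = ∑' i : V, ∑ j ∈ G.neighborFinset i, g i j := by
    intro g hg
    have hg' : Summable (fun x : Σ i : V, G.neighborSet i => g x.1 x.2.1) :=
      (pairEquiv G).summable_iff.mpr hg
    calc ∑' p : P, g p.1.1 p.1.2
        = ∑' x : Σ i : V, G.neighborSet i, g x.1 x.2.1 := ((pairEquiv G).tsum_eq _).symm
      _ = ∑' i : V, ∑' j : G.neighborSet i, g i j := Summable.tsum_sigma hg'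
      _ = ∑' i : V, ∑ j ∈ G.neighborFinset i, g i j := by
          refine tsum_congr fun i => ?_
          rw [tsum_fintype, SimpleGraph.neighborFinset_def]
          apply Finset.sum_set_coe
  -- swap symmetry
  have hswap : (∑' p : P, z p.1.1 p.1.2 * (A (t + 1) p.1.1 : ℝ) * (A t p.1.2 : ℝ))
      = ∑' p : P, z p.1.1 p.1.2 * (A t p.1.1 : ℝ) * (A (t + 1) p.1.2 : ℝ) := by
    rw [← (swapEquiv G).tsum_eq
      (fun p : P => z p.1.1 p.1.2 * (A (t + 1) p.1.1 : ℝ) * (A t p.1.2 : ℝ))]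
    refine tsum_congr fun p => ?_
    show z p.1.2 p.1.1 * (A (t + 1) p.1.2 : ℝ) * (A t p.1.1 : ℝ)
        = z p.1.1 p.1.2 * (A t p.1.1 : ℝ) * (A (t + 1) p.1.2 : ℝ)
    rw [hsym]; ring
  -- rewrite the RHS
  have hRHSfun : ∀ i : V,
      (1 / 2 : ℝ) * ((A (t + 2) i : ℝ) - (A t i : ℝ)) *
          ∑ j ∈ G.neighborFinset i, z i j * (A (t + 1) j : ℝ)
        = ∑ j ∈ G.neighborFinset i,
            ((1 / 2 : ℝ) * (z i j * (A (t + 2) i : ℝ) * (A (t + 1) j : ℝ))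
              - (1 / 2 : ℝ) * (z i j * (A t i : ℝ) * (A (t + 1) j : ℝ))) := by
    intro i
    rw [Finset.mul_sum]
    refine Finset.sum_congr rfl fun j _ => ?_
    ring
  have hsum2 : Summable (fun p : P =>
      (1 / 2 : ℝ) * (z p.1.1 p.1.2 * (A (t + 2) p.1.1 : ℝ) * (A (t + 1) p.1.2 : ℝ))
        - (1 / 2 : ℝ) * (z p.1.1 p.1.2 * (A t p.1.1 : ℝ) * (A (t + 1) p.1.2 : ℝ))) :=
    ((key (t + 2) (t + 1)).mul_left _).sub ((key t (t + 1)).mul_left _)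
  have hRHS : (∑' i : V, (1 / 2 : ℝ) * ((A (t + 2) i : ℝ) - (A t i : ℝ)) *
        ∑ j ∈ G.neighborFinset i, z i j * (A (t + 1) j : ℝ))
      = (1 / 2 : ℝ) * (∑' p : P, z p.1.1 p.1.2 * (A (t + 2) p.1.1 : ℝ) * (A (t + 1) p.1.2 : ℝ))
        - (1 / 2 : ℝ) * (∑' p : P, z p.1.1 p.1.2 * (A t p.1.1 : ℝ) * (A (t + 1) p.1.2 : ℝ)) := by
    have := hpair (fun i j =>
        (1 / 2 : ℝ) * (z i j * (A (t + 2) i : ℝ) * (A (t + 1) j : ℝ))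
          - (1 / 2 : ℝ) * (z i j * (A t i : ℝ) * (A (t + 1) j : ℝ))) hsum2
    calc (∑' i : V, (1 / 2 : ℝ) * ((A (t + 2) i : ℝ) - (A t i : ℝ)) *
            ∑ j ∈ G.neighborFinset i, z i j * (A (t + 1) j : ℝ))
        = ∑' i : V, ∑ j ∈ G.neighborFinset i,
            ((1 / 2 : ℝ) * (z i j * (A (t + 2) i : ℝ) * (A (t + 1) j : ℝ))
              - (1 / 2 : ℝ) * (z i j * (A t i : ℝ) * (A (t + 1) j : ℝ))) :=
          tsum_congr hRHSfun
      _ = ∑' p : P,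
            ((1 / 2 : ℝ) * (z p.1.1 p.1.2 * (A (t + 2) p.1.1 : ℝ) * (A (t + 1) p.1.2 : ℝ))
              - (1 / 2 : ℝ) * (z p.1.1 p.1.2 * (A t p.1.1 : ℝ) * (A (t + 1) p.1.2 : ℝ))) :=
          this.symm
      _ = _ := by
          rw [Summable.tsum_sub (((key (t + 2) (t + 1)).mul_left _)) (((key t (t + 1)).mul_left _)),
            tsum_mul_left, tsum_mul_left]
  rw [hexp (t + 2) (t + 1), hexp (t + 1) t, hswap, hRHS]
  ring
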